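/- Let L be a Lie algebra over a field k of characteristic 0, V a k-vector space viewed as a trivial L-module, and P ∈ Z²(L,V) a 2-cocycle, giving the central extension L_P = L ⊕ V with bracket [x+u, y+v]_P = [x,y] + P(x,y). An automorphism θ of L lifts to an automorphism θ_P of L_P (i.e. there exists θ_P ∈ Aut_k(L_P) with π ∘ θ_P = θ ∘ π, where π : L_P → L is the projection) if and only if there exist γ ∈ Hom_k(L,V) and μ ∈ GL_k(V) such that μ ∘ P − P ∘ (θ × θ) = δ(γ), where δ(γ)(x,y) = −γ([x,y]). -/

import Mathlib

/-- An automorphism θ of L lifts to the central extension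
`L_P = L ⊕ V` (with bracket `[x+u,y+v]_P = [x,y] + P x y`) iff there exist
`γ ∈ Hom_k(L,V)` and `μ ∈ GL_k(V)` with `μ ∘ P − P ∘ (θ × θ) = δ(γ)`. -/
theorem statement0 (k : Type*) [Field k] [CharZero k]
    (L : Type*) [LieRing L] [LieAlgebra k L]
    (V : Type*) [AddCommGroup V] [Module k V]
    (P : L →ₗ[k] L →ₗ[k] V)
    (hP_alt : ∀ x : L, P x x = 0)
    (hP_cocycle : ∀ x y z : L, P ⁅x, y⁆ z + P ⁅y, z⁆ x + P ⁅z, x⁆ y = 0)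
    (θ : L ≃ₗ⁅k⁆ L) :
    (∃ θP : (L × V) ≃ₗ[k] (L × V),
      (∀ a b : L × V, θP (⁅a.1, b.1⁆, P a.1 b.1)
        = (⁅(θP a).1, (θP b).1⁆, P (θP a).1 (θP b).1)) ∧
      (∀ a : L × V, (θP a).1 = θ a.1)) ↔
    (∃ (γ : L →ₗ[k] V) (μ : V ≃ₗ[k] V),
      ∀ x y : L, μ (P x y) - P (θ x) (θ y) = -γ ⁅x, y⁆) := by
  constructor
  · rintro ⟨θP, hbr, hfst⟩
    set f : L →ₗ[k] V :=
      (LinearMap.snd k L V) ∘ₗ θP.toLinearMap ∘ₗ (LinearMap.inl k L V) with hf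
    set g : V →ₗ[k] V :=
      (LinearMap.snd k L V) ∘ₗ θP.toLinearMap ∘ₗ (LinearMap.inr k L V) with hg
    have hθP0 : ∀ v : V, θP (0, v) = (0, g v) := by
      intro v
      have h1 : (θP (0, v)).1 = θ 0 := hfst (0, v)
      simp only [map_zero] at h1
      ext
      · rw [h1]
      · simp [hg]
    have hgbij : Function.Bijective g := by
      constructor
      · intro u v h
        have h2 : θP (0, u) = θP (0, v) := by rw [hθP0, hθP0, h]
        exact congrArg Prod.snd (θP.injective h2)
      · intro w
        set a := θP.symm (0, w) with ha
        have haval : θP a = (0, w) := θP.apply_symm_apply _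
        have h1 : θ a.1 = 0 := by rw [← hfst a, haval]
        have h1' : a.1 = 0 := by
          have h4 : θ a.1 = θ 0 := by rw [h1]; exact θ.toLinearEquiv.map_zero.symm
          exact θ.injective h4
        refine ⟨a.2, ?_⟩
        have h3 : θP (a.1, a.2) = (0, w) := by simpa using haval
        rw [h1', hθP0] at h3
        exact (Prod.mk.injEq _ _ _ _ ▸ h3).2
    refine ⟨f, LinearEquiv.ofBijective g hgbij, ?_⟩
    intro x y
    have key := hbr (x, 0) (y, 0)
    have hx : (θP (x, 0)).1 = θ x := hfst (x, 0)
    have hy : (θP (y, 0)).1 = θ y := hfst (y, 0)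
    rw [hx, hy] at key
    have h2 : (θP (⁅x, y⁆, P x y)).2 = f ⁅x, y⁆ + g (P x y) := by
      have hsplit : ((⁅x, y⁆ : L), P x y) = ((⁅x, y⁆ : L), (0 : V)) + ((0 : L), P x y) := by
        simp
      rw [hsplit, map_add]
      simp [hf, hg]
    rw [key] at h2
    simp only at h2
    simp only [LinearEquiv.ofBijective_apply]
    rw [h2]
    abel
  · rintro ⟨γ, μ, h⟩
    set F : (L × V) →ₗ[k] (L × V) :=
      LinearMap.prod (θ.toLinearMap ∘ₗ LinearMap.fst k L V)
        (μ.toLinearMap ∘ₗ LinearMap.snd k L V + γ ∘ₗ LinearMap.fst k L V) with hF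
    set G : (L × V) →ₗ[k] (L × V) :=
      LinearMap.prod ((θ.symm : L →ₗ⁅k⁆ L).toLinearMap ∘ₗ LinearMap.fst k L V)
        ((μ.symm.toLinearMap ∘ₗ LinearMap.snd k L V)
          - μ.symm.toLinearMap ∘ₗ γ ∘ₗ (θ.symm : L →ₗ⁅k⁆ L).toLinearMap ∘ₗ LinearMap.fst k L V) with hG
    have hFG : F ∘ₗ G = LinearMap.id := by
      apply LinearMap.ext
      rintro ⟨x, v⟩
      ext
      · simp [hF, hG, LieEquiv.coe_toLieHom]
      · simp [hF, hG, LieEquiv.coe_toLieHom]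
    have hGF : G ∘ₗ F = LinearMap.id := by
      apply LinearMap.ext
      rintro ⟨x, v⟩
      ext
      · simp [hF, hG, LieEquiv.coe_toLieHom]
      · simp [hF, hG, LieEquiv.coe_toLieHom]
    refine ⟨LinearEquiv.ofLinear F G hFG hGF, ?_, ?_⟩
    · rintro ⟨x, u⟩ ⟨y, v⟩
      simp only [LinearEquiv.ofLinear_apply, hF, LinearMap.prod_apply, LinearMap.coe_comp,
        Function.comp_apply, LinearMap.fst_apply, LinearMap.snd_apply, Pi.prod,
        LinearMap.add_apply, LieHom.coe_toLinearMap,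
        LinearEquiv.coe_coe]
      ext
      · show θ.toLieHom ⁅x, y⁆ = ⁅θ.toLieHom x, θ.toLieHom y⁆
        exact θ.toLieHom.map_lie x y
      · show μ (P x y) + γ ⁅x, y⁆ = P (θ.toLieHom x) (θ.toLieHom y)
        have h' := h x y
        rw [sub_eq_iff_eq_add] at h'
        show μ (P x y) + γ ⁅x, y⁆ = P (θ x) (θ y)
        rw [h']
        abel
    · rintro ⟨x, u⟩
      simp only [LinearEquiv.ofLinear_apply, hF, LinearMap.prod_apply, LinearMap.coe_comp,
        Function.comp_apply, LinearMap.fst_apply, Pi.prod, LieHom.coe_toLinearMap]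
      rfl
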